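/- Under the hypothesis Σ_{n≥1} |b_n| < ∞, the convergents of b_0 + K_{n=1}^∞ 1/b_n satisfy: the limits P_0 = lim A_{2n}, P_1 = lim A_{2n+1}, Q_0 = lim B_{2n}, Q_1 = lim B_{2n+1} all exist and are finite, and P_1 Q_0 − P_0 Q_1 = 1. In particular, the odd and even approximants converge to distinct values P_1/Q_1 ≠ P_0/Q_0 (as points of the Riemann sphere). -/

import Mathlib

open Filter Topology

private lemma stern_stolz_bound (b : ℕ → ℂ)
    (hsum : Summable (fun n : ℕ => ‖b (n + 1)‖))
    (A : ℕ → ℂ) (C : ℝ)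
    (h0 : ‖A 0‖ ≤ C) (h1 : ‖A 1‖ ≤ C)
    (hA : ∀ n, A (n + 2) = b (n + 1) * A (n + 1) + A n) :
    ∀ n, ‖A n‖ ≤ C * Real.exp (∑' n, ‖b (n + 1)‖) := by
  have hC : 0 ≤ C := le_trans (norm_nonneg _) h0
  set S := ∑' n, ‖b (n + 1)‖ with hS
  have hSn : 0 ≤ S := tsum_nonneg fun n => norm_nonneg _
  -- partial product bound
  have key : ∀ n, ‖A n‖ ≤ C * ∏ k ∈ Finset.range n, (1 + ‖b (k + 1)‖)
      ∧ ‖A (n + 1)‖ ≤ C * ∏ k ∈ Finset.range n, (1 + ‖b (k + 1)‖) := by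
    intro n
    induction n with
    | zero => simpa using ⟨h0, h1⟩
    | succ n ih =>
      obtain ⟨ihn, ihn1⟩ := ih
      have hP : 0 ≤ ∏ k ∈ Finset.range n, (1 + ‖b (k + 1)‖) :=
        Finset.prod_nonneg fun k _ => by positivity
      have hstep : ‖A (n + 2)‖ ≤
          C * ∏ k ∈ Finset.range (n + 1), (1 + ‖b (k + 1)‖) := by
        rw [hA n, Finset.prod_range_succ]
        calc ‖b (n + 1) * A (n + 1) + A n‖
            ≤ ‖b (n + 1) * A (n + 1)‖ + ‖A n‖ :=
              norm_add_le _ _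
          _ = ‖b (n + 1)‖ * ‖A (n + 1)‖ + ‖A n‖ := by
              rw [norm_mul]
          _ ≤ ‖b (n + 1)‖ * (C * ∏ k ∈ Finset.range n, (1 + ‖b (k + 1)‖))
              + C * ∏ k ∈ Finset.range n, (1 + ‖b (k + 1)‖) := by
              gcongr
          _ = C * ((∏ k ∈ Finset.range n, (1 + ‖b (k + 1)‖)) * (1 + ‖b (n + 1)‖)) := by ring
      refine ⟨le_trans ihn1 ?_, hstep⟩
      rw [Finset.prod_range_succ]
      have h1x : (1:ℝ) ≤ 1 + ‖b (n + 1)‖ := by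
        have := norm_nonneg (b (n + 1)); linarith
      exact mul_le_mul_of_nonneg_left (le_mul_of_one_le_right hP h1x) hC
  intro n
  refine le_trans (key n).1 ?_
  have hprod : ∏ k ∈ Finset.range n, (1 + ‖b (k + 1)‖) ≤ Real.exp S := by
    calc ∏ k ∈ Finset.range n, (1 + ‖b (k + 1)‖)
        ≤ ∏ k ∈ Finset.range n, Real.exp (‖b (k + 1)‖) := by
          refine Finset.prod_le_prod (fun k _ => by positivity) (fun k _ => ?_)
          simpa [add_comm] using Real.add_one_le_exp (‖b (k + 1)‖)
      _ = Real.exp (∑ k ∈ Finset.range n, ‖b (k + 1)‖) := by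
          rw [Real.exp_sum]
      _ ≤ Real.exp S := by
          apply Real.exp_le_exp.2
          exact Summable.sum_le_tsum _ (fun k _ => norm_nonneg _) hsum
  exact mul_le_mul_of_nonneg_left hprod hC

private lemma stern_stolz_conv (b : ℕ → ℂ)
    (hsum : Summable (fun n : ℕ => ‖b (n + 1)‖))
    (A : ℕ → ℂ) (M : ℝ) (hM : ∀ n, ‖A n‖ ≤ M)
    (hA : ∀ n, A (n + 2) = b (n + 1) * A (n + 1) + A n) (j : ℕ) :
    ∃ P : ℂ, Tendsto (fun n => A (2 * n + j)) atTop (𝓝 P) := by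
  have hcauchy : CauchySeq (fun n => A (2 * n + j)) := by
    apply cauchySeq_of_summable_dist
    have hs : Summable (fun n : ℕ => M * ‖b (2 * n + j + 1)‖) := by
      have := (hsum.comp_injective (i := fun n : ℕ => 2 * n + j) (by
        intro x y h; simpa using h)).mul_left M
      simpa [Function.comp] using this
    refine Summable.of_nonneg_of_le (fun n => dist_nonneg) (fun n => ?_) hs
    have : A (2 * (n + 1) + j) - A (2 * n + j) = b (2 * n + j + 1) * A (2 * n + j + 1) := by
      have := hA (2 * n + j)
      have h2 : 2 * (n + 1) + j = (2 * n + j) + 2 := by omega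
      rw [h2, this]; ring_nf
    rw [dist_eq_norm]
    calc ‖A (2 * n + j) - A (2 * (n + 1) + j)‖ = ‖A (2 * (n + 1) + j) - A (2 * n + j)‖ := by
          rw [norm_sub_rev]
      _ = ‖b (2 * n + j + 1)‖ * ‖A (2 * n + j + 1)‖ := by
          rw [this]; simp [norm_mul]
      _ ≤ ‖b (2 * n + j + 1)‖ * M := by
          gcongr; exact hM _
      _ = M * ‖b (2 * n + j + 1)‖ := mul_comm _ _
  exact cauchySeq_tendsto_of_complete hcauchy

theorem stern_stolz
    (b A B : ℕ → ℂ)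
    (hsum : Summable (fun n : ℕ => ‖b (n + 1)‖))
    (hA0 : A 0 = 1) (hA1 : A 1 = b 0) (hB0 : B 0 = 0) (hB1 : B 1 = 1)
    (hA : ∀ n, A (n + 2) = b (n + 1) * A (n + 1) + A n)
    (hB : ∀ n, B (n + 2) = b (n + 1) * B (n + 1) + B n) :
    ∃ P0 P1 Q0 Q1 : ℂ,
      Tendsto (fun n => A (2 * n + 1)) atTop (𝓝 P0) ∧
      Tendsto (fun n => A (2 * n + 2)) atTop (𝓝 P1) ∧
      Tendsto (fun n => B (2 * n + 1)) atTop (𝓝 Q0) ∧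
      Tendsto (fun n => B (2 * n + 2)) atTop (𝓝 Q1) ∧
      P1 * Q0 - P0 * Q1 = 1 ∧
      P1 * Q0 ≠ P0 * Q1 := by
  set C : ℝ := max 1 (‖b 0‖) with hC
  have hMA : ∀ n, ‖A n‖ ≤ C * Real.exp (∑' n, ‖b (n + 1)‖) :=
    stern_stolz_bound b hsum A C (by simp only [hA0, norm_one]; exact le_max_left _ _) (by rw [hA1]; exact le_max_right _ _) hA
  have hMB : ∀ n, ‖B n‖ ≤ C * Real.exp (∑' n, ‖b (n + 1)‖) :=
    stern_stolz_bound b hsum B C (by simp only [hB0, norm_zero]; exact le_trans zero_le_one (le_max_left _ _)) (by simp only [hB1, norm_one]; exact le_max_left _ _) hB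
  obtain ⟨P0, hP0⟩ := stern_stolz_conv b hsum A _ hMA hA 1
  obtain ⟨P1, hP1⟩ := stern_stolz_conv b hsum A _ hMA hA 2
  obtain ⟨Q0, hQ0⟩ := stern_stolz_conv b hsum B _ hMB hB 1
  obtain ⟨Q1, hQ1⟩ := stern_stolz_conv b hsum B _ hMB hB 2
  have det : ∀ n, A (n + 1) * B n - A n * B (n + 1) = (-1 : ℂ) ^ (n + 1) := by
    intro n
    induction n with
    | zero => simp [hA0, hA1, hB0, hB1]
    | succ n ih =>
      rw [hA n, hB n]
      linear_combination -ih
  have hdet1 : ∀ n : ℕ, A (2 * n + 2) * B (2 * n + 1) - A (2 * n + 1) * B (2 * n + 2) = 1 := by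
    intro n
    have := det (2 * n + 1)
    rw [this]
    rw [show 2 * n + 1 + 1 = 2 * (n + 1) by omega, pow_mul]
    norm_num
  have hlim : Tendsto (fun n => A (2 * n + 2) * B (2 * n + 1) - A (2 * n + 1) * B (2 * n + 2))
      atTop (𝓝 (P1 * Q0 - P0 * Q1)) := (hP1.mul hQ0).sub (hP0.mul hQ1)
  have heq : P1 * Q0 - P0 * Q1 = 1 := by
    have : Tendsto (fun _ : ℕ => (1 : ℂ)) atTop (𝓝 (P1 * Q0 - P0 * Q1)) := by
      simpa [hdet1] using hlim
    exact (tendsto_nhds_unique this tendsto_const_nhds)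
  refine ⟨P0, P1, Q0, Q1, hP0, hP1, hQ0, hQ1, heq, ?_⟩
  intro h
  rw [h, sub_self] at heq
  exact zero_ne_one heq
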